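/- Let X be a complete separable metric space and N' < 0. Let μ be a Borel probability measure on X and let ν_n = ρ_n μ and ν = ρμ be Borel probability measures absolutely continuous with respect to μ. If ν_n → ν weakly and limsup_{n→∞} S_{N',μ}(ν_n) ≤ S_{N',μ}(ν) < ∞, then ∫_X |ρ_n − ρ| dμ → 0 as n → ∞. -/

import Mathlib

/-- A bundled mm-space: a complete separable metric space with a Borel probability measure. -/
structure MMSpace where
  X : Type
  [metric : MetricSpace X]
  [cpl : CompleteSpace X]
  [sep : TopologicalSpace.SeparableSpace X]
  [mble : MeasurableSpace X]
  [borel : BorelSpace X]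
  μ : MeasureTheory.Measure X
  [prob : MeasureTheory.IsProbabilityMeasure μ]

attribute [instance] MMSpace.metric MMSpace.cpl MMSpace.sep MMSpace.mble MMSpace.borel MMSpace.prob

open MeasureTheory ENNReal Filter Topology Set

noncomputable section

/-- A coupling of two measures on `X` is a measure on `X × X` whose marginals are the
given measures. -/
def IsCoupling {X : Type*} [MeasurableSpace X] (π : Measure (X × X)) (μ ν : Measure X) : Prop :=
  π.map Prod.fst = μ ∧ π.map Prod.snd = ν

/-- A measure has finite second moment if `∫ d(x,x₀)² dμ < ∞` for some base point. -/
def HasFiniteSecondMoment {X : Type*} [PseudoMetricSpace X] [MeasurableSpace X]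
    (μ : Measure X) : Prop :=
  ∃ x₀ : X, ∫⁻ x, ENNReal.ofReal (dist x x₀) ^ 2 ∂μ < ∞

/-- The square-root of the quadratic transport cost of a coupling. -/
def cost2 {X : Type*} [PseudoMetricSpace X] [MeasurableSpace X] (π : Measure (X × X)) : ℝ≥0∞ :=
  (∫⁻ p, ENNReal.ofReal (dist p.1 p.2) ^ 2 ∂π) ^ (1 / 2 : ℝ)

/-- The 2-Wasserstein distance (valued in `[0,∞]`). -/
def W2 {X : Type*} [PseudoMetricSpace X] [MeasurableSpace X] (μ ν : Measure X) : ℝ≥0∞ :=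
  ⨅ (π : Measure (X × X)) (_ : IsCoupling π μ ν), cost2 π

/-- A coupling is optimal if it attains the 2-Wasserstein distance. -/
def IsOptimalCoupling {X : Type*} [PseudoMetricSpace X] [MeasurableSpace X]
    (π : Measure (X × X)) (μ ν : Measure X) : Prop :=
  IsCoupling π μ ν ∧ cost2 π = W2 μ ν

open Classical in
/-- The Rényi entropy `S_{N',μ}(ν) = ∫ ρ^{1-1/N'} dμ` if `ν = ρμ ≪ μ`, and `∞` otherwise. -/
def renyiEntropy {X : Type*} [MeasurableSpace X] (N' : ℝ) (μ ν : Measure X) : ℝ≥0∞ :=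
  if ν ≪ μ then ∫⁻ x, (ν.rnDeriv μ x) ^ (1 - 1 / N') ∂μ else ∞

/-- Weak convergence of a sequence of measures: convergence of integrals of all bounded
continuous functions. -/
def WeakConv {X : Type*} [TopologicalSpace X] [MeasurableSpace X]
    (μs : ℕ → Measure X) (μ : Measure X) : Prop :=
  ∀ f : BoundedContinuousFunction X ℝ,
    Tendsto (fun n => ∫ x, f x ∂(μs n)) atTop (𝓝 (∫ x, f x ∂μ))

/-- Tightness of a sequence of measures. -/
def IsTightSeq {X : Type*} [TopologicalSpace X] [MeasurableSpace X]
    (μs : ℕ → Measure X) : Prop :=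
  ∀ ε : ℝ, 0 < ε → ∃ K : Set X, IsCompact K ∧ ∀ n, μs n Kᶜ < ENNReal.ofReal ε

/-- The function `s_κ`, with the convention `s_κ(0) = 1`. -/
def sKappa (κ θ : ℝ) : ℝ :=
  if θ = 0 then 1
  else if 0 < κ then Real.sin (Real.sqrt κ * θ) / (Real.sqrt κ * θ)
  else if κ < 0 then Real.sinh (Real.sqrt (-κ) * θ) / (Real.sqrt (-κ) * θ)
  else 1

/-- `ω_κ = π/√κ` for `κ > 0` and `∞` otherwise. -/
def omegaKappa (κ : ℝ) : ℝ≥0∞ :=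
  if 0 < κ then ENNReal.ofReal (Real.pi / Real.sqrt κ) else ∞

/-- The coefficient `τ_{K,N}^{(t)}(θ)`, valued in `[0,∞]`. -/
def tauCoeff (K N t θ : ℝ) : ℝ≥0∞ :=
  if ENNReal.ofReal θ < omegaKappa (K / (N - 1)) then
    ENNReal.ofReal (t * (sKappa (K / (N - 1)) (t * θ) / sKappa (K / (N - 1)) θ) ^ (1 - 1 / N))
  else ∞

/-- The coefficient `σ_κ^{(t)}(θ)`, valued in `[0,∞]`. -/
def sigmaCoeff (κ t θ : ℝ) : ℝ≥0∞ :=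
  if ENNReal.ofReal θ < omegaKappa κ then
    ENNReal.ofReal (t * sKappa κ (t * θ) / sKappa κ θ)
  else ∞

/-- The curvature-dimension condition `CD(K,N)` for `N < 0`, for a (probability) measure on a
metric space. -/
def IsCDSpace {X : Type*} [MetricSpace X] [MeasurableSpace X] (K N : ℝ) (μX : Measure X) : Prop :=
  ∀ ν₀ ν₁ : Measure X, IsProbabilityMeasure ν₀ → IsProbabilityMeasure ν₁ →
    ν₀ ≪ μX → ν₁ ≪ μX →
    HasFiniteSecondMoment ν₀ → HasFiniteSecondMoment ν₁ →
    renyiEntropy N μX ν₀ < ∞ → renyiEntropy N μX ν₁ < ∞ →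
    ∃ (νt : ℝ → Measure X) (π : Measure (X × X)),
      νt 0 = ν₀ ∧ νt 1 = ν₁ ∧
      (∀ s ∈ Icc (0:ℝ) 1, ∀ t ∈ Icc (0:ℝ) 1,
        W2 (νt s) (νt t) = ENNReal.ofReal |s - t| * W2 ν₀ ν₁) ∧
      IsOptimalCoupling π ν₀ ν₁ ∧
      (∀ t ∈ Icc (0:ℝ) 1, ∀ N' ∈ Ico N (0:ℝ),
        renyiEntropy N' μX ν₀ < ∞ → renyiEntropy N' μX ν₁ < ∞ →
        renyiEntropy N' μX (νt t) ≤
          (∫⁻ p, tauCoeff K N' (1 - t) (dist p.1 p.2) * (ν₀.rnDeriv μX p.1) ^ (-(1 / N')) ∂π)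
          + ∫⁻ p, tauCoeff K N' t (dist p.1 p.2) * (ν₁.rnDeriv μX p.2) ^ (-(1 / N')) ∂π)

/-- The reduced curvature-dimension condition `CD*(K,N)` for `N < 0`. -/
def IsCDStarSpace {X : Type*} [MetricSpace X] [MeasurableSpace X] (K N : ℝ)
    (μX : Measure X) : Prop :=
  ∀ ν₀ ν₁ : Measure X, IsProbabilityMeasure ν₀ → IsProbabilityMeasure ν₁ →
    ν₀ ≪ μX → ν₁ ≪ μX →
    HasFiniteSecondMoment ν₀ → HasFiniteSecondMoment ν₁ →
    renyiEntropy N μX ν₀ < ∞ → renyiEntropy N μX ν₁ < ∞ →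
    ∃ (νt : ℝ → Measure X) (π : Measure (X × X)),
      νt 0 = ν₀ ∧ νt 1 = ν₁ ∧
      (∀ s ∈ Icc (0:ℝ) 1, ∀ t ∈ Icc (0:ℝ) 1,
        W2 (νt s) (νt t) = ENNReal.ofReal |s - t| * W2 ν₀ ν₁) ∧
      IsOptimalCoupling π ν₀ ν₁ ∧
      (∀ t ∈ Icc (0:ℝ) 1, ∀ N' ∈ Ico N (0:ℝ),
        renyiEntropy N' μX ν₀ < ∞ → renyiEntropy N' μX ν₁ < ∞ →
        renyiEntropy N' μX (νt t) ≤
          (∫⁻ p, sigmaCoeff (K / N') (1 - t) (dist p.1 p.2)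
              * (ν₀.rnDeriv μX p.1) ^ (-(1 / N')) ∂π)
          + ∫⁻ p, sigmaCoeff (K / N') t (dist p.1 p.2)
              * (ν₁.rnDeriv μX p.2) ^ (-(1 / N')) ∂π)

/-- The conditioned (normalized restricted) measure `ν_B`. -/
def condProb {X : Type*} [MeasurableSpace X] (ν : Measure X) (B : Set X) : Measure X :=
  (ν B)⁻¹ • ν.restrict B

/-- Inverse hyperbolic cosine, `arcosh x = log (x + √(x²-1))`. -/
def acosh (x : ℝ) : ℝ := Real.log (x + Real.sqrt (x ^ 2 - 1))

/-- A parameter of an mm-space: a Borel map `[0,1) → X` pushing the Lebesgue measure to `μ`. -/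
def IsParameter (A : MMSpace) (φ : ℝ → A.X) : Prop :=
  Measurable φ ∧ Measure.map φ (volume.restrict (Ico (0:ℝ) 1)) = A.μ

/-- The Ky Fan distance between two measurable functions on `[0,1)`. -/
def kyFan (f g : ℝ → ℝ) : ℝ :=
  sInf {ε : ℝ | 0 ≤ ε ∧
    (volume.restrict (Ico (0:ℝ) 1)) {x | ε < |f x - g x|} ≤ ENNReal.ofReal ε}

/-- The pullback of the 1-Lipschitz functions on an mm-space by a parameter. -/
def pullLip (A : MMSpace) (φ : ℝ → A.X) : Set (ℝ → ℝ) :=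
  {h | ∃ f : A.X → ℝ, LipschitzWith 1 f ∧ h = f ∘ φ}

/-- The Hausdorff distance between two sets of functions with respect to the Ky Fan metric. -/
def hausdorffKF (A B : Set (ℝ → ℝ)) : ℝ :=
  max (⨆ f ∈ A, ⨅ g ∈ B, kyFan f g) (⨆ g ∈ B, ⨅ f ∈ A, kyFan f g)

/-- The observable distance between two mm-spaces. -/
def dconc (A B : MMSpace) : ℝ :=
  sInf {r : ℝ | ∃ φ ψ, IsParameter A φ ∧ IsParameter B ψ ∧
    r = hausdorffKF (pullLip A φ) (pullLip B ψ)}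

end

noncomputable section

/-- The smooth approximation `F_a(x) = a⁻¹ log(e^{ax} + e^{-ax})` of `|x|`. -/
def Fa (a x : ℝ) : ℝ := a⁻¹ * Real.log (Real.exp (a * x) + Real.exp (-(a * x)))

/-- A (minimizing, constant-speed) geodesic parametrized by `[0,1]`. -/
def IsGeodOn01 {X : Type*} [PseudoMetricSpace X] (γ : ℝ → X) : Prop :=
  ∀ s ∈ Set.Icc (0:ℝ) 1, ∀ s' ∈ Set.Icc (0:ℝ) 1,
    dist (γ s) (γ s') = |s - s'| * dist (γ 0) (γ 1)

end


section L1Aux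
open MeasureTheory Filter Set Topology

namespace L1Aux

variable {X : Type*} [MeasurableSpace X]

lemma renyi_withDensity (μ : Measure X) [SigmaFinite μ] (N' : ℝ) {g : X → ℝ}
    (hg : Measurable g) :
    renyiEntropy N' μ (μ.withDensity fun x => ENNReal.ofReal (g x)) =
      ∫⁻ x, ENNReal.ofReal (g x) ^ (1 - 1 / N') ∂μ := by
  rw [renyiEntropy, if_pos (withDensity_absolutelyContinuous μ _)]
  refine lintegral_congr_ae ?_
  filter_upwards [Measure.rnDeriv_withDensity μ hg.ennreal_ofReal] with x hx
  rw [hx]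

lemma integrable_of_lintegral_lt (μ : Measure X) {g : X → ℝ} (hg : Measurable g)
    (hnn : ∀ x, 0 ≤ g x) (hfin : ∫⁻ x, ENNReal.ofReal (g x) ∂μ < ∞) :
    Integrable g μ := by
  refine ⟨hg.aestronglyMeasurable, ?_⟩
  rw [hasFiniteIntegral_iff_ofReal (Eventually.of_forall hnn)]
  exact hfin

lemma lintegral_ofReal_eq_one (μ : Measure X) (g : X → ℝ)
    (hP : IsProbabilityMeasure (μ.withDensity fun x => ENNReal.ofReal (g x))) :
    ∫⁻ x, ENNReal.ofReal (g x) ∂μ = 1 := by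
  have h := hP.measure_univ
  rwa [withDensity_apply _ MeasurableSet.univ, setLIntegral_univ] at h

/-- Strict convexity gap for `x ^ p`, uniform lower bound away from the diagonal. -/
lemma phi_lower_bound {p : ℝ} (hp : 1 < p) (M ε : ℝ) (hM : 0 ≤ M) (hε : 0 < ε) :
    ∃ η > 0, ∀ a b : ℝ, 0 ≤ a → 0 ≤ b → b ≤ M → ε ≤ |a - b| →
      η ≤ (a ^ p + b ^ p) / 2 - ((a + b) / 2) ^ p := by
  have hp0 : (0:ℝ) < p := by linarith
  have hhalf : (1/2 : ℝ) ^ p < 1/2 := by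
    calc (1/2:ℝ) ^ p < (1/2) ^ (1:ℝ) :=
          Real.rpow_lt_rpow_of_exponent_gt (by norm_num) (by norm_num) hp
      _ = 1/2 := Real.rpow_one _
  set m : ℝ := ((1/2:ℝ) ^ p + 1/2) / 2 with hm
  have hm1 : (1/2:ℝ)^p < m := by rw [hm]; linarith
  have hm2 : m < 1/2 := by rw [hm]; linarith
  have hmpos : 0 < m := lt_of_le_of_lt (Real.rpow_nonneg (by norm_num) p) hm1
  set t₀ : ℝ := m ^ (1/p) with ht₀
  have ht₀pos : 0 < t₀ := Real.rpow_pos_of_pos hmpos _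
  have ht₀p : t₀ ^ p = m := by
    rw [ht₀, ← Real.rpow_mul hmpos.le, one_div, inv_mul_cancel₀ hp0.ne', Real.rpow_one]
  have ht₀half : 1/2 < t₀ := by
    by_contra hcon; push_neg at hcon
    have : t₀ ^ p ≤ (1/2:ℝ)^p := Real.rpow_le_rpow ht₀pos.le hcon hp0.le
    rw [ht₀p] at this; linarith
  set κ : ℝ := 1/2 - t₀ ^ p with hκ
  have hκpos : 0 < κ := by rw [hκ, ht₀p]; linarith
  set R : ℝ := max (M / (2*t₀ - 1)) ε with hR
  have hRε : ε ≤ R := le_max_right _ _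
  set φ : ℝ × ℝ → ℝ := fun z => (z.1 ^ p + z.2 ^ p) / 2 - ((z.1 + z.2) / 2) ^ p with hφ
  have hrpowc : Continuous fun t : ℝ => t ^ p :=
    continuous_iff_continuousAt.2 fun x => Real.continuousAt_rpow_const x p (Or.inr hp0.le)
  have hφc : Continuous φ := by
    apply Continuous.sub
    · exact ((hrpowc.comp continuous_fst).add (hrpowc.comp continuous_snd)).div_const 2
    · exact hrpowc.comp ((continuous_fst.add continuous_snd).div_const 2)
  have hφpos : ∀ a b : ℝ, 0 ≤ a → 0 ≤ b → a ≠ b → 0 < φ (a, b) := by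
    intro a b ha hb hab
    have h := (strictConvexOn_rpow hp).2 (Set.mem_Ici.2 ha) (Set.mem_Ici.2 hb) hab
      (by norm_num : (0:ℝ) < 1/2) (by norm_num : (0:ℝ) < 1/2) (by norm_num)
    simp only [smul_eq_mul] at h
    have h1 : (1/2:ℝ) * a + 1/2 * b = (a+b)/2 := by ring
    have h2 : (1/2:ℝ) * a^p + 1/2 * b^p = (a^p+b^p)/2 := by ring
    rw [h1, h2] at h
    simp only [hφ]
    linarith
  set K : Set (ℝ × ℝ) := (Icc 0 R ×ˢ Icc 0 M) ∩ {z | ε ≤ |z.1 - z.2|} with hK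
  have hKc : IsCompact K := (isCompact_Icc.prod isCompact_Icc).inter_right
    (isClosed_le continuous_const (continuous_fst.sub continuous_snd).abs)
  have hKne : K.Nonempty :=
    ⟨(ε, 0), ⟨⟨hε.le, hRε⟩, ⟨le_rfl, hM⟩⟩, by simp [abs_of_nonneg hε.le]⟩
  obtain ⟨z₀, hz₀K, hz₀min⟩ := hKc.exists_isMinOn hKne hφc.continuousOn
  have hz₀pos : 0 < φ z₀ := by
    apply hφpos _ _ hz₀K.1.1.1 hz₀K.1.2.1
    intro hcontra
    have h2 := hz₀K.2
    rw [Set.mem_setOf_eq, hcontra, sub_self, abs_zero] at h2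
    linarith
  refine ⟨min (φ z₀) (ε ^ p * κ), lt_min hz₀pos (by positivity), ?_⟩
  intro a b ha hb hbM habs
  by_cases hcase : a ≤ R
  · have hmem : (a, b) ∈ K := ⟨⟨⟨ha, hcase⟩, ⟨hb, hbM⟩⟩, habs⟩
    calc min (φ z₀) (ε ^ p * κ) ≤ φ z₀ := min_le_left _ _
      _ ≤ _ := hz₀min hmem
  · push_neg at hcase
    have haε : ε ≤ a := hRε.trans hcase.le
    have h2t : 0 < 2*t₀ - 1 := by linarith
    have haM : M ≤ (2*t₀ - 1) * a := by
      have hMR : M / (2*t₀-1) ≤ R := le_max_left _ _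
      have := (div_le_iff₀ h2t).mp (hMR.trans hcase.le)
      linarith [this]
    have hab2 : (a + b)/2 ≤ t₀ * a := by nlinarith
    have hmid : ((a+b)/2) ^ p ≤ (t₀ * a) ^ p :=
      Real.rpow_le_rpow (by positivity) hab2 hp0.le
    have hta : (t₀ * a) ^ p = t₀ ^ p * a ^ p := Real.mul_rpow ht₀pos.le ha
    have hbp : 0 ≤ b ^ p := Real.rpow_nonneg hb p
    have hεa : ε ^ p ≤ a ^ p := Real.rpow_le_rpow hε.le haε hp0.le
    rw [hta] at hmid
    calc min (φ z₀) (ε ^ p * κ) ≤ ε ^ p * κ := min_le_right _ _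
      _ ≤ a ^ p * κ := by nlinarith
      _ = a ^ p / 2 - t₀ ^ p * a ^ p := by rw [hκ]; ring
      _ ≤ (a ^ p + b ^ p)/2 - ((a+b)/2) ^ p := by linarith

lemma ofReal_half_add {a b : ℝ} (ha : 0 ≤ a) (hb : 0 ≤ b) :
    ENNReal.ofReal ((a+b)/2) = (ENNReal.ofReal a + ENNReal.ofReal b)/2 := by
  rw [div_eq_mul_inv, ENNReal.ofReal_mul (add_nonneg ha hb), ENNReal.ofReal_add ha hb,
    ENNReal.ofReal_inv_of_pos two_pos, ENNReal.ofReal_ofNat, div_eq_mul_inv]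

lemma exists_ofReal_le {ε : ℝ≥0∞} (hε : 0 < ε) : ∃ e : ℝ, 0 < e ∧ ENNReal.ofReal e ≤ ε := by
  rcases eq_or_ne ε ∞ with h | h
  · exact ⟨1, one_pos, by simp [h]⟩
  · exact ⟨ε.toReal, ENNReal.toReal_pos hε.ne' h, by rw [ENNReal.ofReal_toReal h]⟩

/-- Lower semicontinuity of `∫ ρ^p dμ` along weak convergence of the measures `ρ_n μ`. -/
lemma lsc {X : Type*} [MetricSpace X] [MeasurableSpace X] [BorelSpace X]
    {p q : ℝ} (hpq : p.HolderConjugate q)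
    (μ : Measure X) [IsProbabilityMeasure μ]
    (gs : ℕ → X → ℝ) (g : X → ℝ)
    (hgsm : ∀ n, Measurable (gs n)) (hgm : Measurable g)
    (hgsnn : ∀ n x, 0 ≤ gs n x) (hgnn : ∀ x, 0 ≤ g x)
    (hprob : ∀ n, IsFiniteMeasure (μ.withDensity fun x => ENNReal.ofReal (gs n x)))
    (hprobl : IsFiniteMeasure (μ.withDensity fun x => ENNReal.ofReal (g x)))
    (hw : WeakConv (fun n => μ.withDensity fun x => ENNReal.ofReal (gs n x))
      (μ.withDensity fun x => ENNReal.ofReal (g x)))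
    (hA : ∫⁻ x, ENNReal.ofReal (g x) ^ p ∂μ < ∞) :
    ∫⁻ x, ENNReal.ofReal (g x) ^ p ∂μ ≤
      liminf (fun n => ∫⁻ x, ENNReal.ofReal (gs n x) ^ p ∂μ) atTop := by
  set ν : ℕ → Measure X := fun n => μ.withDensity fun x => ENNReal.ofReal (gs n x) with hν
  set νl : Measure X := μ.withDensity fun x => ENNReal.ofReal (g x) with hνl
  set L := liminf (fun n => ∫⁻ x, ENNReal.ofReal (gs n x) ^ p ∂μ) atTop with hL
  rcases eq_or_ne L ∞ with hLtop | hLne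
  · rw [hLtop]; exact le_top
  have hp1 : 1 < p := hpq.lt
  have hp0 : 0 < p := hpq.pos
  have hq0 : 0 < q := hpq.symm.pos
  have hq1 : 1 ≤ q := hpq.symm.lt.le
  have hofm : ∀ u : X → ℝ, Measurable u → Measurable fun x => ENNReal.ofReal (u x) :=
    fun u hu => hu.ennreal_ofReal
  -- master inequality coming from Young's inequality and weak convergence
  have master : ∀ h : BoundedContinuousFunction X ℝ, (∀ x, 0 ≤ h x) →
      ∫⁻ x, ENNReal.ofReal (h x) * ENNReal.ofReal (g x) ∂μ ≤
        L / ENNReal.ofReal p + (∫⁻ x, ENNReal.ofReal (h x) ^ q ∂μ) / ENNReal.ofReal q := by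
    intro h hh
    set B := ∫⁻ x, ENNReal.ofReal (h x) ^ q ∂μ with hB
    have hhm : Measurable fun x => ENNReal.ofReal (h x) := hofm _ h.continuous.measurable
    have key : ∀ n, ENNReal.ofReal (∫ x, h x ∂ν n) ≤
        (∫⁻ x, ENNReal.ofReal (gs n x) ^ p ∂μ) / ENNReal.ofReal p + B / ENNReal.ofReal q := by
      intro n
      have := hprob n
      rw [ofReal_integral_eq_lintegral_ofReal (h.integrable _) (Eventually.of_forall hh)]
      rw [hν, lintegral_withDensity_eq_lintegral_mul μ (hofm _ (hgsm n)) hhm]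
      calc ∫⁻ x, ((fun x => ENNReal.ofReal (gs n x)) * fun x => ENNReal.ofReal (h x)) x ∂μ
          ≤ ∫⁻ x, (ENNReal.ofReal (gs n x) ^ p / ENNReal.ofReal p
              + ENNReal.ofReal (h x) ^ q / ENNReal.ofReal q) ∂μ :=
            lintegral_mono fun x => ENNReal.young_inequality _ _ hpq
        _ = (∫⁻ x, ENNReal.ofReal (gs n x) ^ p ∂μ) / ENNReal.ofReal p
            + B / ENNReal.ofReal q := by
            simp only [div_eq_mul_inv]
            rw [lintegral_add_left (((hofm _ (hgsm n)).pow_const p).mul_const _),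
              lintegral_mul_const' _ _ (by simp [hp0]),
              lintegral_mul_const' _ _ (by simp [hq0])]
    have hconv : Tendsto (fun n => ENNReal.ofReal (∫ x, h x ∂ν n)) atTop
        (𝓝 (ENNReal.ofReal (∫ x, h x ∂νl))) :=
      (ENNReal.continuous_ofReal.tendsto _).comp (hw h)
    have hlhs : ENNReal.ofReal (∫ x, h x ∂νl)
        = ∫⁻ x, ENNReal.ofReal (h x) * ENNReal.ofReal (g x) ∂μ := by
      rw [ofReal_integral_eq_lintegral_ofReal (h.integrable _) (Eventually.of_forall hh), hνl,
        lintegral_withDensity_eq_lintegral_mul μ (hofm _ hgm) hhm]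
      exact lintegral_congr fun x => by simp only [Pi.mul_apply]; exact mul_comm _ _
    have hmono : Monotone fun x : ℝ≥0∞ => x / ENNReal.ofReal p + B / ENNReal.ofReal q :=
      fun a b hab => add_le_add (ENNReal.div_le_div_right hab _) le_rfl
    have hcont : Continuous fun x : ℝ≥0∞ => x / ENNReal.ofReal p + B / ENNReal.ofReal q := by
      simp only [div_eq_mul_inv]
      exact (ENNReal.continuous_mul_const (by simp [hp0])).add continuous_const
    have hmap := hmono.map_liminf_of_continuousAt
      (F := atTop) (fun n => ∫⁻ x, ENNReal.ofReal (gs n x) ^ p ∂μ) hcont.continuousAt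
    rw [← hlhs]
    calc ENNReal.ofReal (∫ x, h x ∂νl)
        = liminf (fun n => ENNReal.ofReal (∫ x, h x ∂ν n)) atTop := hconv.liminf_eq.symm
      _ ≤ liminf (fun n => (∫⁻ x, ENNReal.ofReal (gs n x) ^ p ∂μ) / ENNReal.ofReal p
            + B / ENNReal.ofReal q) atTop := liminf_le_liminf (Eventually.of_forall key)
      _ = L / ENNReal.ofReal p + B / ENNReal.ofReal q := by
          rw [hmap]; simp only [Function.comp_def]
  -- monotone convergence in the truncation level
  set Ag := ∫⁻ x, ENNReal.ofReal (g x) ^ p ∂μ with hAg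
  have hAM_lim : Tendsto (fun M : ℕ => ∫⁻ x, ENNReal.ofReal (min (g x) M) ^ p ∂μ) atTop
      (𝓝 Ag) := by
    apply lintegral_tendsto_of_tendsto_of_monotone
    · exact fun M => ((hofm _ (hgm.min measurable_const)).pow_const p).aemeasurable
    · refine Eventually.of_forall fun x i j hij => ?_
      exact ENNReal.rpow_le_rpow (ENNReal.ofReal_le_ofReal
        (min_le_min le_rfl (by exact_mod_cast hij))) hp0.le
    · refine Eventually.of_forall fun x => ?_
      obtain ⟨M₀, hM₀⟩ := exists_nat_ge (g x)
      apply tendsto_atTop_of_eventually_const (i₀ := M₀)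
      intro i hi
      rw [min_eq_left (hM₀.trans (by exact_mod_cast hi))]
  refine le_of_tendsto hAM_lim (Eventually.of_forall fun M => ?_)
  -- fixed truncation level M
  set AM := ∫⁻ x, ENNReal.ofReal (min (g x) M) ^ p ∂μ with hAMdef
  have hMnn : (0:ℝ) ≤ M := Nat.cast_nonneg M
  have hminnn : ∀ x, 0 ≤ min (g x) M := fun x => le_min (hgnn x) hMnn
  have hAMfin : AM < ∞ := by
    calc AM ≤ ∫⁻ _, ENNReal.ofReal M ^ p ∂μ := by
          refine lintegral_mono fun x => ?_
          gcongr
          exact min_le_right _ _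
      _ = ENNReal.ofReal M ^ p := by rw [lintegral_const, measure_univ, mul_one]
      _ < ∞ := ENNReal.rpow_lt_top_of_nonneg hp0.le ENNReal.ofReal_ne_top
  set g₀ : X → ℝ := fun x => min (g x) M ^ (p - 1) with hg₀
  have hg₀m : Measurable g₀ :=
    (Real.continuous_rpow_const (by linarith)).measurable.comp (hgm.min measurable_const)
  have hg₀nn : ∀ x, 0 ≤ g₀ x := fun x => Real.rpow_nonneg (hminnn x) _
  have hg₀mem : MemLp g₀ (ENNReal.ofReal q) μ := by
    have hbd : MemLp g₀ ∞ μ := memLp_top_of_bound hg₀m.aestronglyMeasurable ((M:ℝ) ^ (p-1))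
      (Eventually.of_forall fun x => by
        rw [Real.norm_eq_abs, abs_of_nonneg (hg₀nn x)]
        exact Real.rpow_le_rpow (hminnn x) (min_le_right _ _) (by linarith))
    exact hbd.mono_exponent le_top
  have hofg₀ : ∀ x, ENNReal.ofReal (g₀ x) = ENNReal.ofReal (min (g x) M) ^ (p-1) :=
    fun x => (ENNReal.ofReal_rpow_of_nonneg (hminnn x) (by linarith)).symm
  -- the δ-approximation step
  have key : ∀ δ : ℝ, 0 < δ → AM ≤ L / ENNReal.ofReal p
      + (AM ^ (1/q) + ENNReal.ofReal δ) ^ q / ENNReal.ofReal q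
      + ENNReal.ofReal δ * Ag ^ (1/p) := by
    intro δ hδ
    obtain ⟨h, hhnear, -⟩ := hg₀mem.exists_boundedContinuous_eLpNorm_sub_le
      (by simp) (ε := ENNReal.ofReal δ) (by simp [hδ])
    set h' : BoundedContinuousFunction X ℝ := h ⊔ 0 with hh'def
    have hh'x : ∀ x, h' x = max (h x) 0 := fun x => rfl
    have hh'nn : ∀ x, 0 ≤ h' x := fun x => le_max_right _ _
    set Δ : X → ℝ≥0∞ := fun x => ENNReal.ofReal |h' x - g₀ x| with hΔdef
    have hΔm : Measurable Δ :=
      hofm _ ((h'.continuous.measurable.sub hg₀m).abs)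
    have hΔle : ∀ x, Δ x ≤ ENNReal.ofReal |g₀ x - h x| := by
      intro x
      apply ENNReal.ofReal_le_ofReal
      rw [abs_sub_comm (g₀ x)]
      calc |h' x - g₀ x| = |max (h x) 0 - max (g₀ x) 0| := by
            rw [hh'x, max_eq_left (hg₀nn x)]
        _ ≤ |h x - g₀ x| := abs_max_sub_max_le_abs _ _ _
    have hΔq : ∫⁻ x, Δ x ^ q ∂μ ≤ ENNReal.ofReal δ ^ q := by
      have h1 : eLpNorm (g₀ - ⇑h) (ENNReal.ofReal q) μ
          = (∫⁻ x, ENNReal.ofReal |g₀ x - h x| ^ q ∂μ) ^ (1/q) := by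
        rw [eLpNorm_eq_lintegral_rpow_enorm_toReal (by simp [hq0]) (by simp)]
        rw [ENNReal.toReal_ofReal hq0.le]
        congr 1
        refine lintegral_congr fun x => ?_
        rw [← Real.enorm_eq_ofReal_abs]
        rfl
      calc ∫⁻ x, Δ x ^ q ∂μ
          ≤ ∫⁻ x, ENNReal.ofReal |g₀ x - h x| ^ q ∂μ := by
            refine lintegral_mono fun x => ?_
            gcongr
            exact hΔle x
        _ = (eLpNorm (g₀ - ⇑h) (ENNReal.ofReal q) μ) ^ q := by
            rw [h1, ← ENNReal.rpow_mul, one_div, inv_mul_cancel₀ hq0.ne', ENNReal.rpow_one]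
        _ ≤ ENNReal.ofReal δ ^ q := by gcongr
    have c1 : AM ≤ ∫⁻ x, ENNReal.ofReal (g₀ x) * ENNReal.ofReal (g x) ∂μ := by
      refine lintegral_mono fun x => ?_
      rw [hofg₀ x]
      calc ENNReal.ofReal (min (g x) (M:ℝ)) ^ p
          = ENNReal.ofReal (min (g x) M) ^ (p-1) * ENNReal.ofReal (min (g x) M) ^ (1:ℝ) := by
            rw [← ENNReal.rpow_add_of_nonneg _ _ (by linarith) zero_le_one]
            congr 1
            ring
        _ = ENNReal.ofReal (min (g x) M) ^ (p-1) * ENNReal.ofReal (min (g x) M) := by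
            rw [ENNReal.rpow_one]
        _ ≤ ENNReal.ofReal (min (g x) M) ^ (p-1) * ENNReal.ofReal (g x) :=
            mul_le_mul_right (ENNReal.ofReal_le_ofReal (min_le_left _ _)) _
    have c2 : ∫⁻ x, ENNReal.ofReal (g₀ x) * ENNReal.ofReal (g x) ∂μ ≤
        (∫⁻ x, ENNReal.ofReal (h' x) * ENNReal.ofReal (g x) ∂μ)
          + ∫⁻ x, Δ x * ENNReal.ofReal (g x) ∂μ := by
      rw [← lintegral_add_left (f := fun x => ENNReal.ofReal (h' x) * ENNReal.ofReal (g x))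
        ((hofm _ h'.continuous.measurable).mul (hofm _ hgm))]
      refine lintegral_mono fun x => ?_
      have htri : ENNReal.ofReal (g₀ x) ≤ ENNReal.ofReal (h' x) + Δ x := by
        rw [hΔdef, ← ENNReal.ofReal_add (hh'nn x) (abs_nonneg _)]
        apply ENNReal.ofReal_le_ofReal
        cases abs_cases (h' x - g₀ x) with
        | inl hc => linarith [hc.1]
        | inr hc => linarith [hc.1]
      calc ENNReal.ofReal (g₀ x) * ENNReal.ofReal (g x)
          ≤ (ENNReal.ofReal (h' x) + Δ x) * ENNReal.ofReal (g x) :=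
            mul_le_mul_left htri _
        _ = ENNReal.ofReal (h' x) * ENNReal.ofReal (g x) + Δ x * ENNReal.ofReal (g x) :=
            add_mul _ _ _
    have c3 : ∫⁻ x, Δ x * ENNReal.ofReal (g x) ∂μ ≤ ENNReal.ofReal δ * Ag ^ (1/p) := by
      calc ∫⁻ x, Δ x * ENNReal.ofReal (g x) ∂μ
          ≤ (∫⁻ x, Δ x ^ q ∂μ) ^ (1/q) * (∫⁻ x, ENNReal.ofReal (g x) ^ p ∂μ) ^ (1/p) :=
            ENNReal.lintegral_mul_le_Lp_mul_Lq μ hpq.symm hΔm.aemeasurable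
              (hofm _ hgm).aemeasurable
        _ ≤ (ENNReal.ofReal δ ^ q) ^ (1/q) * Ag ^ (1/p) := by rw [hAg]; gcongr
        _ = ENNReal.ofReal δ * Ag ^ (1/p) := by
            rw [← ENNReal.rpow_mul, mul_one_div, div_self hq0.ne', ENNReal.rpow_one]
    have c5 : (∫⁻ x, ENNReal.ofReal (h' x) ^ q ∂μ) ≤ (AM ^ (1/q) + ENNReal.ofReal δ) ^ q := by
      have hg₀q : ∫⁻ x, ENNReal.ofReal (g₀ x) ^ q ∂μ = AM := by
        refine lintegral_congr fun x => ?_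
        rw [hofg₀ x, ← ENNReal.rpow_mul, hpq.sub_one_mul_conj]
      calc ∫⁻ x, ENNReal.ofReal (h' x) ^ q ∂μ
          ≤ ∫⁻ x, (ENNReal.ofReal (g₀ x) + Δ x) ^ q ∂μ := by
            refine lintegral_mono fun x => ?_
            gcongr
            rw [hΔdef, ← ENNReal.ofReal_add (hg₀nn x) (abs_nonneg _)]
            apply ENNReal.ofReal_le_ofReal
            cases abs_cases (h' x - g₀ x) with
            | inl hc => linarith [hc.1]
            | inr hc => linarith [hc.1]
        _ = ((∫⁻ x, (ENNReal.ofReal (g₀ x) + Δ x) ^ q ∂μ) ^ (1/q)) ^ q := by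
            rw [← ENNReal.rpow_mul, one_div, inv_mul_cancel₀ hq0.ne', ENNReal.rpow_one]
        _ ≤ ((∫⁻ x, ENNReal.ofReal (g₀ x) ^ q ∂μ) ^ (1/q)
              + (∫⁻ x, Δ x ^ q ∂μ) ^ (1/q)) ^ q :=
            ENNReal.rpow_le_rpow (ENNReal.lintegral_Lp_add_le
              (hofm _ hg₀m).aemeasurable hΔm.aemeasurable hq1) hq0.le
        _ ≤ (AM ^ (1/q) + ENNReal.ofReal δ) ^ q := by
            rw [hg₀q]
            gcongr
            calc (∫⁻ x, Δ x ^ q ∂μ) ^ (1/q) ≤ (ENNReal.ofReal δ ^ q) ^ (1/q) := by gcongr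
              _ = ENNReal.ofReal δ := by
                  rw [← ENNReal.rpow_mul, mul_one_div, div_self hq0.ne', ENNReal.rpow_one]
    calc AM ≤ ∫⁻ x, ENNReal.ofReal (g₀ x) * ENNReal.ofReal (g x) ∂μ := c1
      _ ≤ (∫⁻ x, ENNReal.ofReal (h' x) * ENNReal.ofReal (g x) ∂μ)
            + ∫⁻ x, Δ x * ENNReal.ofReal (g x) ∂μ := c2
      _ ≤ (L / ENNReal.ofReal p + (∫⁻ x, ENNReal.ofReal (h' x) ^ q ∂μ) / ENNReal.ofReal q)
            + ENNReal.ofReal δ * Ag ^ (1/p) := add_le_add (master h' hh'nn) c3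
      _ ≤ L / ENNReal.ofReal p + (AM ^ (1/q) + ENNReal.ofReal δ) ^ q / ENNReal.ofReal q
            + ENNReal.ofReal δ * Ag ^ (1/p) := by gcongr
  -- pass δ → 0
  have h0 : Tendsto (fun k : ℕ => ENNReal.ofReal (1/(k+1))) atTop (𝓝 0) := by
    have := ENNReal.continuous_ofReal.tendsto (0:ℝ)
    simpa [ENNReal.ofReal_zero, Function.comp_def] using this.comp tendsto_one_div_add_atTop_nhds_zero_nat
  have hAgfinpow : Ag ^ (1/p) ≠ ∞ := by
    exact (ENNReal.rpow_lt_top_of_nonneg (by positivity) hA.ne).ne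
  have hlim : Tendsto (fun k : ℕ => L / ENNReal.ofReal p
      + (AM ^ (1/q) + ENNReal.ofReal (1/(k+1))) ^ q / ENNReal.ofReal q
      + ENNReal.ofReal (1/(k+1)) * Ag ^ (1/p)) atTop
      (𝓝 (L / ENNReal.ofReal p + (AM ^ (1/q) + 0) ^ q / ENNReal.ofReal q
        + 0 * Ag ^ (1/p))) := by
    refine Tendsto.add (Tendsto.add tendsto_const_nhds ?_)
      (ENNReal.Tendsto.mul_const h0 (Or.inr hAgfinpow))
    have hc : Continuous fun t : ℝ≥0∞ =>
        (AM ^ (1/q) + t) ^ q / ENNReal.ofReal q := by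
      simp only [div_eq_mul_inv]
      exact (ENNReal.continuous_mul_const (by simp [hq0])).comp
        (ENNReal.continuous_rpow_const.comp (continuous_const.add continuous_id))
    exact (hc.tendsto _).comp h0
  have hAMle : AM ≤ L / ENNReal.ofReal p + AM / ENNReal.ofReal q := by
    have hge := ge_of_tendsto hlim (Eventually.of_forall fun k =>
      key (1/(k+1)) (by positivity))
    have hsimp : (AM ^ (1/q) + 0) ^ q = AM := by
      rw [add_zero, ← ENNReal.rpow_mul, one_div, inv_mul_cancel₀ hq0.ne', ENNReal.rpow_one]
    rw [hsimp, zero_mul, add_zero] at hge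
    exact hge
  -- conclude AM ≤ L
  have hone : (ENNReal.ofReal p)⁻¹ + (ENNReal.ofReal q)⁻¹ = 1 := by
    rw [← ENNReal.ofReal_inv_of_pos hp0, ← ENNReal.ofReal_inv_of_pos hq0,
      ← ENNReal.ofReal_add (by positivity) (by positivity), ← ENNReal.ofReal_one]
    congr 1
    exact hpq.inv_add_inv_eq_one
  have hsplit : AM * (ENNReal.ofReal p)⁻¹ + AM * (ENNReal.ofReal q)⁻¹ = AM := by
    rw [← mul_add, hone, mul_one]
  have hfin2 : AM * (ENNReal.ofReal p)⁻¹ + AM * (ENNReal.ofReal q)⁻¹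
      ≤ L * (ENNReal.ofReal p)⁻¹ + AM * (ENNReal.ofReal q)⁻¹ := by
    rw [hsplit]
    simp only [div_eq_mul_inv] at hAMle
    exact hAMle
  have hAMq_ne : AM * (ENNReal.ofReal q)⁻¹ ≠ ∞ :=
    (ENNReal.mul_lt_top hAMfin (by simp [hq0])).ne
  have hcancel : AM * (ENNReal.ofReal p)⁻¹ ≤ L * (ENNReal.ofReal p)⁻¹ :=
    (ENNReal.add_le_add_iff_right hAMq_ne).mp hfin2
  have := (ENNReal.mul_le_mul_iff_left (by simp) (by simp [hp0])).mp hcancel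
  exact this

end L1Aux

end L1Aux

open MeasureTheory Filter Set in
/-- Weak convergence plus convergence of Rényi entropies (`N' < 0`) implies
`L¹(μ)`-convergence of the densities. -/
theorem L1_convergence_of_densities {X : Type*} [MetricSpace X] [CompleteSpace X]
    [TopologicalSpace.SeparableSpace X] [MeasurableSpace X] [BorelSpace X]
    (N' : ℝ) (hN' : N' < 0)
    (μ : Measure X) [IsProbabilityMeasure μ]
    (ρs : ℕ → X → ℝ) (ρ : X → ℝ)
    (hρsm : ∀ n, Measurable (ρs n)) (hρm : Measurable ρ)
    (hρsnn : ∀ n x, 0 ≤ ρs n x) (hρnn : ∀ x, 0 ≤ ρ x)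
    (hps : ∀ n, IsProbabilityMeasure (μ.withDensity fun x => ENNReal.ofReal (ρs n x)))
    (hp : IsProbabilityMeasure (μ.withDensity fun x => ENNReal.ofReal (ρ x)))
    (hw : WeakConv (fun n => μ.withDensity fun x => ENNReal.ofReal (ρs n x))
      (μ.withDensity fun x => ENNReal.ofReal (ρ x)))
    (hfin : renyiEntropy N' μ (μ.withDensity fun x => ENNReal.ofReal (ρ x)) < ∞)
    (hlimsup : limsup (fun n =>
        renyiEntropy N' μ (μ.withDensity fun x => ENNReal.ofReal (ρs n x))) atTop ≤
      renyiEntropy N' μ (μ.withDensity fun x => ENNReal.ofReal (ρ x))) :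
    Tendsto (fun n => ∫ x, |ρs n x - ρ x| ∂μ) atTop (nhds 0) := by
  classical
  set p : ℝ := 1 - 1/N' with hpdef
  have hNneg : 1/N' < 0 := div_neg_of_pos_of_neg one_pos hN'
  have hp1 : 1 < p := by rw [hpdef]; linarith
  have hp0 : 0 < p := by linarith
  have hpq : p.HolderConjugate (Real.conjExponent p) := Real.HolderConjugate.conjExponent hp1
  set q : ℝ := Real.conjExponent p with hqdef
  have hq0 : 0 < q := hpq.symm.pos
  -- rewrite the entropies as `lintegral`s
  set A := ∫⁻ x, ENNReal.ofReal (ρ x) ^ p ∂μ with hAdef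
  have hA_eq : renyiEntropy N' μ (μ.withDensity fun x => ENNReal.ofReal (ρ x)) = A :=
    L1Aux.renyi_withDensity μ N' hρm
  have hfinA : A < ∞ := by rwa [hA_eq] at hfin
  have hlimsupA : limsup (fun n => ∫⁻ x, ENNReal.ofReal (ρs n x) ^ p ∂μ) atTop ≤ A := by
    rw [← hA_eq]
    have hfun : (fun n => ∫⁻ x, ENNReal.ofReal (ρs n x) ^ p ∂μ)
        = fun n => renyiEntropy N' μ (μ.withDensity fun x => ENNReal.ofReal (ρs n x)) :=
      funext fun n => (L1Aux.renyi_withDensity μ N' (hρsm n)).symm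
    rw [hfun]
    exact hlimsup
  have hint1 : ∫⁻ x, ENNReal.ofReal (ρ x) ∂μ = 1 := L1Aux.lintegral_ofReal_eq_one μ ρ hp
  have hintn : ∀ n, ∫⁻ x, ENNReal.ofReal (ρs n x) ∂μ = 1 :=
    fun n => L1Aux.lintegral_ofReal_eq_one μ (ρs n) (hps n)
  have hρint : Integrable ρ μ :=
    L1Aux.integrable_of_lintegral_lt μ hρm hρnn (by rw [hint1]; exact ENNReal.one_lt_top)
  have hρsint : ∀ n, Integrable (ρs n) μ := fun n =>
    L1Aux.integrable_of_lintegral_lt μ (hρsm n) (hρsnn n)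
      (by rw [hintn n]; exact ENNReal.one_lt_top)
  have hAne0 : A ≠ 0 := by
    intro h0
    rw [hAdef, lintegral_eq_zero_iff (hρm.ennreal_ofReal.pow_const p)] at h0
    have hz : ∫⁻ x, ENNReal.ofReal (ρ x) ∂μ = 0 := by
      rw [lintegral_eq_zero_iff hρm.ennreal_ofReal]
      filter_upwards [h0] with x hx
      simp only [Pi.zero_apply] at hx ⊢
      rw [ENNReal.rpow_eq_zero_iff] at hx
      rcases hx with ⟨h, -⟩ | ⟨h, -⟩
      · exact h
      · exact absurd h (by simp)
    rw [hint1] at hz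
    exact one_ne_zero hz
  -- the midpoint densities
  set σ : ℕ → X → ℝ := fun n x => (ρs n x + ρ x)/2 with hσdef
  have hσm : ∀ n, Measurable (σ n) := fun n => ((hρsm n).add hρm).div_const 2
  have hσnn : ∀ n x, 0 ≤ σ n x := fun n x => by
    simp only [hσdef]
    exact div_nonneg (add_nonneg (hρsnn n x) (hρnn x)) (by norm_num)
  have hmid_meas : ∀ n, (μ.withDensity fun x => ENNReal.ofReal (σ n x))
      = (2:ℝ≥0∞)⁻¹ • ((μ.withDensity fun x => ENNReal.ofReal (ρs n x))
          + μ.withDensity fun x => ENNReal.ofReal (ρ x)) := by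
    intro n
    have hmeasadd : Measurable
        ((fun x => ENNReal.ofReal (ρs n x)) + fun x => ENNReal.ofReal (ρ x)) :=
      (hρsm n).ennreal_ofReal.add hρm.ennreal_ofReal
    rw [← withDensity_add_left (hρsm n).ennreal_ofReal, ← withDensity_smul _ hmeasadd]
    congr 1
    funext x
    simp only [Pi.smul_apply, Pi.add_apply, smul_eq_mul]
    rw [hσdef, L1Aux.ofReal_half_add (hρsnn n x) (hρnn x), div_eq_mul_inv, mul_comm]
  have hmidfin : ∀ n, IsFiniteMeasure (μ.withDensity fun x => ENNReal.ofReal (σ n x)) := by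
    intro n
    rw [hmid_meas n]
    refine ⟨?_⟩
    rw [Measure.smul_apply, Measure.add_apply, (hps n).measure_univ, hp.measure_univ]
    rw [smul_eq_mul, one_add_one_eq_two, ENNReal.inv_mul_cancel (by norm_num) (by norm_num)]
    exact ENNReal.one_lt_top
  have hwmid : WeakConv (fun n => μ.withDensity fun x => ENNReal.ofReal (σ n x))
      (μ.withDensity fun x => ENNReal.ofReal (ρ x)) := by
    intro f
    have hint : ∀ n, ∫ x, f x ∂(μ.withDensity fun x => ENNReal.ofReal (σ n x))
        = (2:ℝ)⁻¹ * ((∫ x, f x ∂(μ.withDensity fun x => ENNReal.ofReal (ρs n x)))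
            + ∫ x, f x ∂(μ.withDensity fun x => ENNReal.ofReal (ρ x))) := by
      intro n
      have := hps n
      rw [hmid_meas n, integral_smul_measure,
        integral_add_measure (f.integrable _) (f.integrable _)]
      norm_num
    simp only [hint]
    have h2 : Tendsto (fun n => (2:ℝ)⁻¹
        * ((∫ x, f x ∂(μ.withDensity fun x => ENNReal.ofReal (ρs n x)))
          + ∫ x, f x ∂(μ.withDensity fun x => ENNReal.ofReal (ρ x)))) atTop
        (𝓝 ((2:ℝ)⁻¹ * ((∫ x, f x ∂(μ.withDensity fun x => ENNReal.ofReal (ρ x)))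
          + ∫ x, f x ∂(μ.withDensity fun x => ENNReal.ofReal (ρ x))))) :=
      ((hw f).add tendsto_const_nhds).const_mul _
    have heq : (2:ℝ)⁻¹ * ((∫ x, f x ∂(μ.withDensity fun x => ENNReal.ofReal (ρ x)))
        + ∫ x, f x ∂(μ.withDensity fun x => ENNReal.ofReal (ρ x)))
        = ∫ x, f x ∂(μ.withDensity fun x => ENNReal.ofReal (ρ x)) := by ring
    rwa [heq] at h2
  have hlsc := L1Aux.lsc hpq μ σ ρ hσm hρm hσnn hρnn hmidfin (by infer_instance) hwmid hfinA
  -- the convexity defect functions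
  have hrme : ∀ u : X → ℝ, Measurable u → Measurable fun x => u x ^ p := fun u hu =>
    (Real.continuous_rpow_const hp0.le).measurable.comp hu
  set D : ℕ → X → ℝ := fun n x => (ρs n x ^ p + ρ x ^ p)/2 - σ n x ^ p with hDdef
  have hDm : ∀ n, Measurable (D n) := fun n =>
    (((hrme _ (hρsm n)).add (hrme _ hρm)).div_const 2).sub (hrme _ (hσm n))
  have hDnn : ∀ n x, 0 ≤ D n x := by
    intro n x
    have h := (convexOn_rpow hp1.le).2 (Set.mem_Ici.2 (hρsnn n x)) (Set.mem_Ici.2 (hρnn x))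
      (by norm_num : (0:ℝ) ≤ 1/2) (by norm_num : (0:ℝ) ≤ 1/2) (by norm_num)
    simp only [smul_eq_mul] at h
    have e1 : (1/2:ℝ) * ρs n x + 1/2 * ρ x = (ρs n x + ρ x)/2 := by ring
    have e2 : (1/2:ℝ) * ρs n x ^ p + 1/2 * ρ x ^ p = (ρs n x ^ p + ρ x ^ p)/2 := by ring
    rw [e1, e2] at h
    simp only [hDdef, hσdef]
    linarith
  set T : ℕ → ℝ≥0∞ := fun n => ∫⁻ x, ENNReal.ofReal (D n x) ∂μ with hTdef
  -- pointwise decomposition of `ofReal (D n x)`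
  have hpt : ∀ n x, ENNReal.ofReal (D n x)
      = (ENNReal.ofReal (ρs n x) ^ p + ENNReal.ofReal (ρ x) ^ p)/2
        - ENNReal.ofReal (σ n x) ^ p := by
    intro n x
    rw [hDdef]
    rw [ENNReal.ofReal_sub _ (Real.rpow_nonneg (hσnn n x) p)]
    rw [L1Aux.ofReal_half_add (Real.rpow_nonneg (hρsnn n x) p) (Real.rpow_nonneg (hρnn x) p)]
    rw [ENNReal.ofReal_rpow_of_nonneg (hρsnn n x) hp0.le,
      ENNReal.ofReal_rpow_of_nonneg (hρnn x) hp0.le,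
      ENNReal.ofReal_rpow_of_nonneg (hσnn n x) hp0.le]
  have hSmeas : ∀ n, Measurable fun x =>
      (ENNReal.ofReal (ρs n x) ^ p + ENNReal.ofReal (ρ x) ^ p)/2 := by
    intro n
    apply Measurable.div_const
    exact ((hρsm n).ennreal_ofReal.pow_const p).add (hρm.ennreal_ofReal.pow_const p)
  have hMmeas : ∀ n, Measurable fun x => ENNReal.ofReal (σ n x) ^ p :=
    fun n => (hσm n).ennreal_ofReal.pow_const p
  have hSle : ∀ n x, ENNReal.ofReal (σ n x) ^ p
      ≤ (ENNReal.ofReal (ρs n x) ^ p + ENNReal.ofReal (ρ x) ^ p)/2 := by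
    intro n x
    have h := hDnn n x
    have := hpt n x
    -- from `0 ≤ D n x` in the reals
    rw [ENNReal.ofReal_rpow_of_nonneg (hρsnn n x) hp0.le,
      ENNReal.ofReal_rpow_of_nonneg (hρnn x) hp0.le,
      ENNReal.ofReal_rpow_of_nonneg (hσnn n x) hp0.le,
      ← L1Aux.ofReal_half_add (Real.rpow_nonneg (hρsnn n x) p) (Real.rpow_nonneg (hρnn x) p)]
    apply ENNReal.ofReal_le_ofReal
    rw [hDdef] at h
    linarith
  have hSsum : ∀ n, ∫⁻ x, (ENNReal.ofReal (ρs n x) ^ p + ENNReal.ofReal (ρ x) ^ p)/2 ∂μ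
      = ((∫⁻ x, ENNReal.ofReal (ρs n x) ^ p ∂μ) + A)/2 := by
    intro n
    simp only [div_eq_mul_inv]
    rw [lintegral_mul_const' _ _ (by simp),
      lintegral_add_left ((hρsm n).ennreal_ofReal.pow_const p)]
  -- `T n → 0`
  have hTto : Tendsto T atTop (𝓝 0) := by
    rw [ENNReal.tendsto_nhds_zero]
    intro ε hε
    obtain ⟨e, he, hee⟩ := L1Aux.exists_ofReal_le hε
    set e4 := ENNReal.ofReal (e/4) with he4def
    have he4 : e4 ≠ 0 := by simp [he4def, he]
    have he4fin : e4 ≠ ∞ := by simp [he4def]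
    have hub : ∀ᶠ n in atTop, (∫⁻ x, ENNReal.ofReal (ρs n x) ^ p ∂μ) ≤ A + e4 :=
      (eventually_lt_of_limsup_lt
        (lt_of_le_of_lt hlimsupA (ENNReal.lt_add_right hfinA.ne he4))).mono
        fun n hn => hn.le
    have hlb : ∀ᶠ n in atTop, A ≤ (∫⁻ x, ENNReal.ofReal (σ n x) ^ p ∂μ) + e4 := by
      have h1 : A - e4 < liminf (fun n => ∫⁻ x, ENNReal.ofReal (σ n x) ^ p ∂μ) atTop :=
        lt_of_lt_of_le (ENNReal.sub_lt_self hfinA.ne hAne0 he4) hlsc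
      exact (eventually_lt_of_lt_liminf h1).mono fun n hn => by
        calc A ≤ (A - e4) + e4 := le_tsub_add
          _ ≤ (∫⁻ x, ENNReal.ofReal (σ n x) ^ p ∂μ) + e4 := add_le_add_left hn.le _
    filter_upwards [hub, hlb] with n h1 h2
    set An := ∫⁻ x, ENNReal.ofReal (ρs n x) ^ p ∂μ with hAndef
    set Mn := ∫⁻ x, ENNReal.ofReal (σ n x) ^ p ∂μ with hMndef
    have hAnfin : An ≠ ∞ := (lt_of_le_of_lt h1 (by
      exact ENNReal.add_lt_top.mpr ⟨hfinA, he4fin.lt_top⟩)).ne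
    have hMnle : Mn ≤ (An + A)/2 := by
      rw [← hSsum n]
      exact lintegral_mono fun x => hSle n x
    have hMnfin : Mn ≠ ∞ := by
      refine (lt_of_le_of_lt hMnle ?_).ne
      apply ENNReal.div_lt_top _ (by norm_num)
      simp [hAnfin, hfinA.ne]
    have hTn : T n = ((An + A)/2) - Mn := by
      rw [hTdef]
      simp only [hpt n]
      rw [lintegral_sub (hMmeas n) hMnfin (Eventually.of_forall fun x => hSle n x), hSsum n]
    have hcancel2 : (2:ℝ≥0∞) * ((An + A)/2) = An + A := by
      rw [ENNReal.mul_div_cancel' (by norm_num) (by norm_num)]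
    have hkey : 2 * T n + 2 * Mn ≤ 2 * Mn + 3 * e4 := by
      have hTM : T n + Mn = (An + A)/2 := by
        rw [hTn]
        exact tsub_add_cancel_of_le hMnle
      have : 2 * T n + 2 * Mn = An + A := by
        rw [← hcancel2, ← hTM]
        ring
      rw [this]
      calc An + A ≤ (A + e4) + (Mn + e4) := add_le_add h1 h2
        _ ≤ ((Mn + e4) + e4) + (Mn + e4) := by
            exact add_le_add_left (add_le_add_left h2 _) _
        _ = 2 * Mn + 3 * e4 := by ring
    have h2Mn : (2:ℝ≥0∞) * Mn ≠ ∞ := ENNReal.mul_ne_top (by norm_num) hMnfin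
    have hTn3 : 2 * T n ≤ 3 * e4 := by
      have h := hkey
      rw [add_comm (2 * T n) (2 * Mn)] at h
      exact (ENNReal.add_le_add_iff_left h2Mn).mp h
    have hfour : (4:ℝ≥0∞) * e4 = ENNReal.ofReal e := by
      rw [he4def, show (4:ℝ≥0∞) = ENNReal.ofReal 4 by simp,
        ← ENNReal.ofReal_mul (by norm_num)]
      congr 1
      ring
    calc T n ≤ 2 * T n := by
          rw [two_mul]
          exact le_add_self
      _ ≤ 3 * e4 := hTn3
      _ ≤ 4 * e4 := mul_le_mul_left (by norm_num) _
      _ = ENNReal.ofReal e := hfour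
      _ ≤ ε := hee
  -- convergence in measure
  have hmeas : TendstoInMeasure μ (fun n => ρs n) atTop ρ := by
    rw [tendstoInMeasure_iff_dist]
    intro ε hε
    rw [ENNReal.tendsto_nhds_zero]
    intro ε' hε'
    obtain ⟨e, he, hee⟩ := L1Aux.exists_ofReal_le hε'
    obtain ⟨Mn, hMn⟩ := exists_nat_ge (2/e + 1)
    set M : ℝ := (Mn : ℝ) with hMdef
    have hM0 : 0 < M := lt_of_lt_of_le (by positivity) hMn
    obtain ⟨η, hη, hηbnd⟩ := L1Aux.phi_lower_bound hp1 M ε hM0.le hε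
    have hmark1 : μ {x | ENNReal.ofReal M ≤ ENNReal.ofReal (ρ x)} ≤ ENNReal.ofReal (e/2) := by
      calc μ {x | ENNReal.ofReal M ≤ ENNReal.ofReal (ρ x)}
          ≤ (∫⁻ x, ENNReal.ofReal (ρ x) ∂μ) / ENNReal.ofReal M :=
            meas_ge_le_lintegral_div hρm.ennreal_ofReal.aemeasurable
              (by simp [hM0]) (by simp)
        _ = 1 / ENNReal.ofReal M := by rw [hint1]
        _ ≤ ENNReal.ofReal (e/2) := by
            rw [ENNReal.div_le_iff (by simp [hM0]) (by simp),
              ← ENNReal.ofReal_mul (by positivity)]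
            refine ENNReal.one_le_ofReal.mpr ?_
            have h2e : 2/e ≤ M := by linarith
            have hid : e/2 * (2/e) = 1 := by field_simp
            nlinarith [mul_le_mul_of_nonneg_left h2e (by positivity : (0:ℝ) ≤ e/2)]
    have hTev : ∀ᶠ n in atTop, T n ≤ ENNReal.ofReal η * ENNReal.ofReal (e/2) :=
      ENNReal.tendsto_nhds_zero.mp hTto _ (ENNReal.mul_pos (by simp [hη]) (by simp [he]))
    filter_upwards [hTev] with n hn
    have hmark2 : μ {x | ENNReal.ofReal η ≤ ENNReal.ofReal (D n x)} ≤ ENNReal.ofReal (e/2) := by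
      calc μ {x | ENNReal.ofReal η ≤ ENNReal.ofReal (D n x)}
          ≤ T n / ENNReal.ofReal η :=
            meas_ge_le_lintegral_div (hDm n).ennreal_ofReal.aemeasurable
              (by simp [hη]) (by simp)
        _ ≤ ENNReal.ofReal (e/2) := by
            rw [ENNReal.div_le_iff (by simp [hη]) (by simp)]
            rw [mul_comm] at hn
            exact hn
    have hincl : {x | ε ≤ dist (ρs n x) (ρ x)} ⊆
        {x | ENNReal.ofReal M ≤ ENNReal.ofReal (ρ x)}
          ∪ {x | ENNReal.ofReal η ≤ ENNReal.ofReal (D n x)} := by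
      intro x hx
      rw [Set.mem_setOf_eq, Real.dist_eq] at hx
      by_cases hb : ρ x ≤ M
      · right
        rw [Set.mem_setOf_eq]
        apply ENNReal.ofReal_le_ofReal
        have := hηbnd (ρs n x) (ρ x) (hρsnn n x) (hρnn x) hb hx
        rw [hDdef]
        simpa [hσdef] using this
      · left
        exact ENNReal.ofReal_le_ofReal (le_of_not_ge hb)
    calc μ {x | ε ≤ dist (ρs n x) (ρ x)}
        ≤ μ ({x | ENNReal.ofReal M ≤ ENNReal.ofReal (ρ x)}
          ∪ {x | ENNReal.ofReal η ≤ ENNReal.ofReal (D n x)}) := measure_mono hincl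
      _ ≤ μ {x | ENNReal.ofReal M ≤ ENNReal.ofReal (ρ x)}
          + μ {x | ENNReal.ofReal η ≤ ENNReal.ofReal (D n x)} := measure_union_le _ _
      _ ≤ ENNReal.ofReal (e/2) + ENNReal.ofReal (e/2) := add_le_add hmark1 hmark2
      _ = ENNReal.ofReal e := by
          rw [← ENNReal.ofReal_add (by positivity) (by positivity)]
          norm_num
      _ ≤ ε' := hee
  -- uniform integrability of a tail of the sequence, and Vitali
  have hbdd : ∀ᶠ n in atTop, (∫⁻ x, ENNReal.ofReal (ρs n x) ^ p ∂μ) ≤ A + 1 :=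
    (eventually_lt_of_limsup_lt
      (lt_of_le_of_lt hlimsupA (ENNReal.lt_add_right hfinA.ne one_ne_zero))).mono
      fun n hn => hn.le
  obtain ⟨N₀, hN₀⟩ := eventually_atTop.mp hbdd
  have hui : UnifIntegrable (fun k => ρs (k + N₀)) 1 μ := by
    intro ε hε
    set C : ℝ := ((A + 1) ^ (1/p)).toReal with hCdef
    have hCfin : (A+1) ^ (1/p) ≠ ∞ :=
      (ENNReal.rpow_lt_top_of_nonneg (by positivity) (by simp [hfinA.ne])).ne
    have hC0 : 0 ≤ C := ENNReal.toReal_nonneg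
    refine ⟨(ε / (C+1)) ^ q, by positivity, ?_⟩
    intro i s hs hμs
    rw [eLpNorm_indicator_eq_eLpNorm_restrict hs]
    have h1 : eLpNorm (ρs (i + N₀)) 1 (μ.restrict s)
        = ∫⁻ x, ENNReal.ofReal (ρs (i+N₀) x) * 1 ∂(μ.restrict s) := by
      rw [eLpNorm_one_eq_lintegral_enorm]
      refine lintegral_congr fun x => ?_
      rw [mul_one, Real.enorm_eq_ofReal_abs, abs_of_nonneg (hρsnn _ x)]
    have hres : (∫⁻ x, ENNReal.ofReal (ρs (i+N₀) x) ^ p ∂(μ.restrict s)) ≤ A + 1 :=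
      le_trans (lintegral_mono' Measure.restrict_le_self le_rfl)
        (hN₀ (i + N₀) (Nat.le_add_left _ _))
    have honeq : (∫⁻ _x, (1:ℝ≥0∞) ^ q ∂(μ.restrict s)) = μ s := by
      simp [Measure.restrict_apply_univ]
    calc eLpNorm (ρs (i + N₀)) 1 (μ.restrict s)
        = ∫⁻ x, ENNReal.ofReal (ρs (i+N₀) x) * 1 ∂(μ.restrict s) := h1
      _ ≤ (∫⁻ x, ENNReal.ofReal (ρs (i+N₀) x) ^ p ∂(μ.restrict s)) ^ (1/p)
          * (∫⁻ _x, (1:ℝ≥0∞) ^ q ∂(μ.restrict s)) ^ (1/q) :=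
        ENNReal.lintegral_mul_le_Lp_mul_Lq _ hpq
          (hρsm _).ennreal_ofReal.aemeasurable aemeasurable_const
      _ ≤ ((A + 1) ^ (1/p)) * (ENNReal.ofReal ((ε/(C+1)) ^ q)) ^ (1/q) := by
          rw [honeq]
          gcongr
          all_goals first
          | exact hres
          | exact hμs
      _ ≤ ENNReal.ofReal (C+1) * ENNReal.ofReal (ε/(C+1)) := by
          have hA1 : (A + 1) ^ (1/p) ≤ ENNReal.ofReal (C+1) := by
            have hCeq : (A+1) ^ (1/p) = ENNReal.ofReal C := by
              rw [hCdef, ENNReal.ofReal_toReal hCfin]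
            rw [hCeq]
            exact ENNReal.ofReal_le_ofReal (by linarith)
          have hδ : (ENNReal.ofReal ((ε/(C+1)) ^ q)) ^ (1/q) = ENNReal.ofReal (ε/(C+1)) := by
            rw [← ENNReal.ofReal_rpow_of_nonneg (by positivity) hq0.le,
              ← ENNReal.rpow_mul, mul_one_div, div_self hq0.ne', ENNReal.rpow_one]
          rw [hδ]
          exact mul_le_mul_left hA1 _
      _ = ENNReal.ofReal ((C+1) * (ε/(C+1))) := (ENNReal.ofReal_mul (by positivity)).symm
      _ = ENNReal.ofReal ε := by
          congr 1
          field_simp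
  have hρmem : MemLp ρ 1 μ := memLp_one_iff_integrable.mpr hρint
  have hmeas_shift : TendstoInMeasure μ (fun k => ρs (k + N₀)) atTop ρ :=
    fun ε hε => (hmeas ε hε).comp (tendsto_add_atTop_nat N₀)
  have hvit := tendsto_Lp_finite_of_tendstoInMeasure (μ := μ) (p := 1) le_rfl ENNReal.one_ne_top
    (fun k => (hρsm (k + N₀)).aestronglyMeasurable) hρmem hui hmeas_shift
  rw [← tendsto_add_atTop_iff_nat N₀]
  have heq : ∀ k, ∫ x, |ρs (k + N₀) x - ρ x| ∂μ
      = (eLpNorm ((fun k => ρs (k + N₀)) k - ρ) 1 μ).toReal := by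
    intro k
    have hintk : Integrable (fun x => ρs (k + N₀) x - ρ x) μ := (hρsint _).sub hρint
    have h2 : eLpNorm ((fun k => ρs (k + N₀)) k - ρ) 1 μ
        = ENNReal.ofReal (∫ x, |ρs (k + N₀) x - ρ x| ∂μ) := by
      rw [eLpNorm_one_eq_lintegral_enorm,
        ofReal_integral_eq_lintegral_ofReal hintk.abs
          (Eventually.of_forall fun x => abs_nonneg _)]
      refine lintegral_congr fun x => ?_
      rw [Real.enorm_eq_ofReal_abs]
      rfl
    rw [h2, ENNReal.toReal_ofReal (integral_nonneg fun x => abs_nonneg _)]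
  have htoreal : Tendsto (fun k => (eLpNorm ((fun k => ρs (k + N₀)) k - ρ) 1 μ).toReal)
      atTop (𝓝 0) := by
    have h0 : Tendsto ENNReal.toReal (𝓝 0) (𝓝 0) := by
      simpa using ENNReal.tendsto_toReal (a := 0) (by simp)
    exact h0.comp hvit
  exact Filter.Tendsto.congr (fun k => (heq k).symm) htoreal
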